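/- For every real x ≥ 0 and every real ω with |ω| < x + 1, the following identity of convergent series holds: ∑_{k=0}^∞ ( 1/(x+k+1) − 1/(x+ω+k+1) ) = ∑_{j=0}^∞ (−1)^j · ω^{j+1} · ( ∑_{k=0}^∞ 1/(x+k+1)^{j+2} ). -/

import Mathlib

set_option maxHeartbeats 1000000 in
theorem tsum_diff_eq_power_series (x ω : ℝ) (hx : 0 ≤ x) (hω : |ω| < x + 1) :
    Summable (fun k : ℕ => (1 / (x + k + 1) - 1 / (x + ω + k + 1) : ℝ)) ∧
    Summable (fun j : ℕ =>
      (-1) ^ j * ω ^ (j + 1) * ∑' k : ℕ, (1 / (x + k + 1) ^ (j + 2) : ℝ)) ∧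
    (∑' k : ℕ, (1 / (x + k + 1) - 1 / (x + ω + k + 1) : ℝ)) =
      ∑' j : ℕ, (-1) ^ j * ω ^ (j + 1) * ∑' k : ℕ, (1 / (x + k + 1) ^ (j + 2) : ℝ) := by
  set g : ℕ → ℕ → ℝ := fun j k => (-1) ^ j * ω ^ (j + 1) * (1 / (x + k + 1) ^ (j + 2)) with hg
  have ha : ∀ k : ℕ, (1 : ℝ) ≤ x + k + 1 := by
    intro k
    have : (0:ℝ) ≤ (k:ℝ) := Nat.cast_nonneg k
    linarith
  have hapos : ∀ k : ℕ, (0 : ℝ) < x + k + 1 := fun k => lt_of_lt_of_le one_pos (ha k)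
  have hx1 : (0:ℝ) < x + 1 := by linarith
  have hω' : -(x+1) < ω := neg_lt_of_abs_lt hω
  have hbpos : ∀ k : ℕ, (0 : ℝ) < x + ω + k + 1 := by
    intro k
    have : (0:ℝ) ≤ (k:ℝ) := Nat.cast_nonneg k
    linarith
  have hr : |ω| / (x+1) < 1 := (div_lt_one hx1).2 hω
  have hr0 : 0 ≤ |ω| / (x+1) := div_nonneg (abs_nonneg _) hx1.le
  -- summability of majorant
  have hk2 : Summable fun k : ℕ => 1 / (x + k + 1) ^ 2 := by
    have hbase : Summable fun k : ℕ => 1 / ((k:ℝ) + 1) ^ 2 := by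
      have := (summable_nat_add_iff (f := fun n : ℕ => 1 / (n:ℝ) ^ 2) 1).2
        (Real.summable_one_div_nat_pow.2 one_lt_two)
      simpa using this
    refine Summable.of_nonneg_of_le (fun k => by positivity) (fun k => ?_) hbase
    have h1 : (0:ℝ) < (k:ℝ) + 1 := by positivity
    refine one_div_le_one_div_of_le (by positivity) ?_
    have : (k:ℝ) + 1 ≤ x + k + 1 := by linarith
    exact pow_le_pow_left₀ h1.le this 2
  have hgeo : Summable fun j : ℕ => |ω| * (|ω|/(x+1)) ^ j :=
    (summable_geometric_of_lt_one hr0 hr).mul_left _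
  have hmaj : Summable fun p : ℕ × ℕ => (|ω| * (|ω|/(x+1)) ^ p.1) * (1 / (x + p.2 + 1) ^ 2) :=
    hgeo.mul_of_nonneg hk2 (fun j => by positivity) (fun k => by positivity)
  -- summability of uncurried g
  have hbound : ∀ p : ℕ × ℕ, ‖Function.uncurry g p‖ ≤
      (|ω| * (|ω|/(x+1)) ^ p.1) * (1 / (x + p.2 + 1) ^ 2) := by
    rintro ⟨j, k⟩
    have hak := hapos k
    have h1 : ‖Function.uncurry g (j, k)‖ = |ω| ^ (j+1) / (x + k + 1) ^ (j+2) := by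
      simp only [Function.uncurry, hg, norm_mul, norm_pow, norm_neg, norm_one, one_pow,
        one_mul, Real.norm_eq_abs, abs_pow, abs_div, abs_one]
      rw [abs_of_pos hak]
      ring
    rw [h1]
    have h2 : (x+1) ^ j * (x + k + 1) ^ 2 ≤ (x + k + 1) ^ (j + 2) := by
      rw [pow_add]
      gcongr
      · linarith [ha k]
    rw [div_le_iff₀ (by positivity)]
    have h3 : |ω| * (|ω| / (x + 1)) ^ j * (1 / (x + k + 1) ^ 2) =
        |ω| ^ (j+1) / ((x+1)^j * (x + k + 1) ^ 2) := by
      rw [div_pow, pow_succ]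
      field_simp
      ring
    rw [h3, div_mul_eq_mul_div, le_div_iff₀ (by positivity)]
    have := pow_nonneg (abs_nonneg ω) (j+1)
    nlinarith [pow_pos (hapos k) (j+2), pow_pos hx1 j, pow_pos (hapos k) 2]
  have hsum : Summable (Function.uncurry g) := Summable.of_norm_bounded hmaj hbound
  -- row sums: for each k, geometric series
  have hrow : ∀ k : ℕ, ∑' j, g j k = 1 / (x + k + 1) - 1 / (x + ω + k + 1) := by
    intro k
    set a : ℝ := x + k + 1 with haa
    have hak : 0 < a := hapos k
    have hnorm : ‖-ω / a‖ < 1 := by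
      rw [Real.norm_eq_abs, abs_div, abs_neg, abs_of_pos hak]
      rw [div_lt_one hak]
      exact lt_of_lt_of_le hω (by linarith [ha k])
    have hterm : ∀ j : ℕ, g j k = (ω / a ^ 2) * (-ω / a) ^ j := by
      intro j
      rw [hg]
      rw [neg_div, neg_pow, div_pow]
      field_simp
      ring
    calc ∑' j, g j k = ∑' j, (ω / a ^ 2) * (-ω / a) ^ j := by
          exact tsum_congr hterm
      _ = (ω / a ^ 2) * (1 - (-ω / a))⁻¹ := by
          rw [tsum_mul_left, tsum_geometric_of_norm_lt_one hnorm]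
      _ = 1 / a - 1 / (x + ω + k + 1) := by
          have hb : x + ω + k + 1 = a + ω := by rw [haa]; ring
          rw [hb]
          have hbk : (0:ℝ) < a + ω := hb ▸ hbpos k
          have hbk2 : ω + a ≠ 0 := (by linarith : (0:ℝ) < ω + a).ne'
          field_simp
          ring_nf
          field_simp
          ring
  -- column sums
  have hcol : ∀ j : ℕ, ∑' k, g j k =
      (-1) ^ j * ω ^ (j + 1) * ∑' k : ℕ, (1 / (x + k + 1) ^ (j + 2)) := by
    intro j
    exact tsum_mul_left
  have hS1 : Summable (fun k : ℕ => (1 / (x + k + 1) - 1 / (x + ω + k + 1) : ℝ)) := by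
    have := hsum.prod_symm.prod
    refine this.congr fun k => ?_
    simpa using hrow k
  have hS2 : Summable (fun j : ℕ =>
      (-1) ^ j * ω ^ (j + 1) * ∑' k : ℕ, (1 / (x + k + 1) ^ (j + 2) : ℝ)) := by
    have := hsum.prod
    refine this.congr fun j => ?_
    simpa using hcol j
  refine ⟨hS1, hS2, ?_⟩
  have hswap : ∑' (k) (j), g j k = ∑' (j) (k), g j k := hsum.tsum_comm
  calc ∑' k : ℕ, (1 / (x + k + 1) - 1 / (x + ω + k + 1) : ℝ)
      = ∑' (k) (j), g j k := tsum_congr fun k => (hrow k).symm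
    _ = ∑' (j) (k), g j k := hswap
    _ = ∑' j : ℕ, (-1) ^ j * ω ^ (j + 1) * ∑' k : ℕ, (1 / (x + k + 1) ^ (j + 2) : ℝ) :=
        tsum_congr hcol
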